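/- arXiv:2101.04708 — 2 statements merged into one kernel-verified Lean document; each statement's English description precedes it below -/
import Mathlib

section
/- Every linear system (P,𝓛) with maximum degree Δ = 2 satisfies τ ≤ ν₂ − 1. -/
open Finset

/-- A linear system: a finite family of lines (finite sets of points) on a finite
point set `P`, any two distinct lines sharing at most one point. -/
structure LinearSystem (α : Type) [DecidableEq α] where
  P : Finset α
  L : Finset (Finset α)
  sub : ∀ l ∈ L, l ⊆ P
  linear : ∀ l ∈ L, ∀ l' ∈ L, l ≠ l' → (l ∩ l').card ≤ 1

variable {α : Type} [DecidableEq α]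

/-- Any two distinct lines share exactly one point. -/
def LinearSystem.Intersecting (S : LinearSystem α) : Prop :=
  ∀ l ∈ S.L, ∀ l' ∈ S.L, l ≠ l' → (l ∩ l').card = 1

/-- Every line has exactly `r` points. -/
def LinearSystem.Uniform (S : LinearSystem α) (r : ℕ) : Prop :=
  ∀ l ∈ S.L, l.card = r

/-- The degree of a point: the number of lines containing it. -/
def LinearSystem.deg (S : LinearSystem α) (x : α) : ℕ :=
  (S.L.filter (fun l => x ∈ l)).card

/-- The maximum degree `Δ`. -/
def LinearSystem.Delta (S : LinearSystem α) : ℕ :=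
  S.P.sup S.deg

/-- A transversal: a set of points meeting every line. -/
def LinearSystem.IsTransversal (S : LinearSystem α) (T : Finset α) : Prop :=
  T ⊆ S.P ∧ ∀ l ∈ S.L, (T ∩ l).Nonempty

/-- The transversal number `τ`: the minimum size of a transversal. -/
noncomputable def LinearSystem.tau (S : LinearSystem α) : ℕ :=
  sInf {n | ∃ T : Finset α, S.IsTransversal T ∧ T.card = n}

/-- A 2-packing: a subfamily of lines such that no point lies in three of them. -/
def LinearSystem.IsTwoPacking (S : LinearSystem α) (R : Finset (Finset α)) : Prop :=
  R ⊆ S.L ∧ ∀ x : α, (R.filter (fun l => x ∈ l)).card ≤ 2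

/-- The 2-packing number `ν₂`: the maximum size of a 2-packing. -/
noncomputable def LinearSystem.nu2 (S : LinearSystem α) : ℕ :=
  sSup {n | ∃ R : Finset (Finset α), S.IsTwoPacking R ∧ R.card = n}

/-- Every linear system with maximum degree `Δ = 2` satisfies `τ ≤ ν₂ − 1`. -/
theorem tau_le_of_delta_eq_two (S : LinearSystem α) (hΔ : S.Delta = 2) :
    S.tau ≤ S.nu2 - 1 := by
  classical
  have hdeg : ∀ x : α, (S.L.filter (fun l => x ∈ l)).card ≤ 2 := by
    intro x
    by_cases hx : x ∈ S.P
    · have h := Finset.le_sup (f := S.deg) hx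
      exact le_trans h hΔ.le
    · have h : S.L.filter (fun l => x ∈ l) = ∅ := by
        apply Finset.filter_eq_empty_iff.mpr
        intro l hl hxl
        exact hx (S.sub l hl hxl)
      simp [h]
  have hnu2 : S.L.card ≤ S.nu2 := by
    apply le_csSup
    · exact ⟨S.L.card, fun n ⟨R, hR, hcard⟩ => hcard ▸ Finset.card_le_card hR.1⟩
    · exact ⟨S.L, ⟨Finset.Subset.refl _, hdeg⟩, rfl⟩
  by_cases hempty : ∃ l ∈ S.L, l = ∅
  · have he : {n | ∃ T : Finset α, S.IsTransversal T ∧ T.card = n} = ∅ := by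
      ext n
      simp only [Set.mem_setOf_eq, Set.mem_empty_iff_false, iff_false]
      rintro ⟨T, ⟨_, hT⟩, _⟩
      obtain ⟨l, hl, rfl⟩ := hempty
      simpa using hT _ hl
    rw [LinearSystem.tau, he, Nat.sInf_empty]
    exact Nat.zero_le _
  push_neg at hempty
  have hne : ∀ l ∈ S.L, l.Nonempty := by
    intro l hl
    exact hempty l hl
  have hPne : S.P.Nonempty := by
    by_contra h
    rw [Finset.not_nonempty_iff_eq_empty] at h
    simp [LinearSystem.Delta, h] at hΔ
  obtain ⟨x, hxP, hxeq⟩ := Finset.exists_mem_eq_sup S.P hPne S.deg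
  have hx2 : (S.L.filter (fun l => x ∈ l)).card = 2 := by
    have : S.deg x = 2 := by rw [← hxeq]; exact hΔ
    exact this
  obtain ⟨l₁, l₂, hne12, hpair⟩ := Finset.card_eq_two.mp hx2
  have hl₁ : l₁ ∈ S.L.filter (fun l => x ∈ l) := by rw [hpair]; simp
  have hl₂ : l₂ ∈ S.L.filter (fun l => x ∈ l) := by rw [hpair]; simp
  rw [Finset.mem_filter] at hl₁ hl₂
  set f : Finset α → α := fun l => if h : l.Nonempty then h.choose else x with hf
  have hfl : ∀ l ∈ S.L, f l ∈ l := by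
    intro l hl
    have h := hne l hl
    simp only [hf, dif_pos h]
    exact h.choose_spec
  set T : Finset α := insert x (((S.L.erase l₁).erase l₂).image f) with hT
  have hTtrans : S.IsTransversal T := by
    constructor
    · intro y hy
      rw [hT, Finset.mem_insert] at hy
      rcases hy with rfl | hy
      · exact hxP
      · obtain ⟨l, hl, rfl⟩ := Finset.mem_image.mp hy
        have hlL : l ∈ S.L := Finset.mem_of_mem_erase (Finset.mem_of_mem_erase hl)
        exact S.sub l hlL (hfl l hlL)
    · intro l hl
      by_cases h1 : l = l₁
      · exact ⟨x, Finset.mem_inter.mpr ⟨Finset.mem_insert_self _ _, h1 ▸ hl₁.2⟩⟩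
      by_cases h2 : l = l₂
      · exact ⟨x, Finset.mem_inter.mpr ⟨Finset.mem_insert_self _ _, h2 ▸ hl₂.2⟩⟩
      have hl' : l ∈ (S.L.erase l₁).erase l₂ :=
        Finset.mem_erase.mpr ⟨h2, Finset.mem_erase.mpr ⟨h1, hl⟩⟩
      exact ⟨f l, Finset.mem_inter.mpr ⟨Finset.mem_insert_of_mem
        (Finset.mem_image_of_mem f hl'), hfl l hl⟩⟩
  have hl₂e : l₂ ∈ S.L.erase l₁ := Finset.mem_erase.mpr ⟨fun h => hne12 h.symm, hl₂.1⟩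
  have hcard2 : 2 ≤ S.L.card := by
    have := Finset.one_lt_card.mpr ⟨l₁, hl₁.1, l₂, hl₂.1, hne12⟩
    omega
  have hcardT : T.card ≤ S.L.card - 1 := by
    have h1 : T.card ≤ (((S.L.erase l₁).erase l₂).image f).card + 1 :=
      Finset.card_insert_le _ _
    have h2 : (((S.L.erase l₁).erase l₂).image f).card ≤ ((S.L.erase l₁).erase l₂).card :=
      Finset.card_image_le
    have h3 : ((S.L.erase l₁).erase l₂).card = S.L.card - 2 := by
      rw [Finset.card_erase_of_mem hl₂e, Finset.card_erase_of_mem hl₁.1]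
      omega
    omega
  have htau : S.tau ≤ T.card := Nat.sInf_le ⟨T, hTtrans, rfl⟩
  omega
end

section
/- Every intersecting linear system (P,𝓛) with maximum degree Δ = 2 satisfies τ = ⌈ν₂/2⌉. -/
open Finset

variable {α : Type} [DecidableEq α]

/-- Auxiliary: a family of nonempty, pairwise-intersecting finite sets admits a
small transversal. -/
lemma exists_small_transversal (L : Finset (Finset α))
    (hne : ∀ l ∈ L, l.Nonempty)
    (hin : ∀ l ∈ L, ∀ l' ∈ L, l ≠ l' → (l ∩ l').Nonempty) :
    ∃ T : Finset α, (∀ x ∈ T, ∃ l ∈ L, x ∈ l) ∧ (∀ l ∈ L, (T ∩ l).Nonempty) ∧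
      2 * T.card ≤ L.card + 1 := by
  revert hne hin
  induction L using Finset.strongInduction with
  | _ L ih =>
    intro hne hin
    rcases L.eq_empty_or_nonempty with rfl | ⟨l, hl⟩
    · exact ⟨∅, by simp, by simp, by simp⟩
    rcases (L.erase l).eq_empty_or_nonempty with he | ⟨l', hl'⟩
    · have hL : L = {l} := by
        rcases (Finset.erase_eq_empty_iff _ _).mp he with h | h
        · exact absurd hl (by simp [h])
        · exact h
      obtain ⟨x, hx⟩ := hne l hl
      refine ⟨{x}, ?_, ?_, ?_⟩
      · intro y hy
        simp only [Finset.mem_singleton] at hy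
        exact ⟨l, hl, hy ▸ hx⟩
      · intro m hm
        rw [hL, Finset.mem_singleton] at hm
        exact ⟨x, Finset.mem_inter.2 ⟨Finset.mem_singleton_self x, hm ▸ hx⟩⟩
      · simp [hL]
    · have hl'L : l' ∈ L := Finset.mem_of_mem_erase hl'
      have hnel : l ≠ l' := (Finset.ne_of_mem_erase hl').symm
      obtain ⟨x, hx⟩ := hin l hl l' hl'L hnel
      have hxl : x ∈ l := (Finset.mem_inter.1 hx).1
      have hxl' : x ∈ l' := (Finset.mem_inter.1 hx).2
      set L' := (L.erase l).erase l' with hL'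
      have hsubL : L' ⊆ L := (Finset.erase_subset _ _).trans (Finset.erase_subset _ _)
      have hlnot : l ∉ L' := by
        simp [hL', Finset.mem_erase]
      have hss : L' ⊂ L := Finset.ssubset_iff_of_subset hsubL |>.2 ⟨l, hl, hlnot⟩
      obtain ⟨T, hT1, hT2, hT3⟩ := ih L' hss (fun m hm => hne m (hsubL hm))
        (fun m hm m' hm' hne' => hin m (hsubL hm) m' (hsubL hm') hne')
      refine ⟨insert x T, ?_, ?_, ?_⟩
      · intro y hy
        rcases Finset.mem_insert.1 hy with rfl | hy
        · exact ⟨l, hl, hxl⟩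
        · obtain ⟨m, hm, hym⟩ := hT1 y hy
          exact ⟨m, hsubL hm, hym⟩
      · intro m hm
        by_cases h1 : m = l
        · exact ⟨x, Finset.mem_inter.2 ⟨Finset.mem_insert_self _ _, h1 ▸ hxl⟩⟩
        by_cases h2 : m = l'
        · exact ⟨x, Finset.mem_inter.2 ⟨Finset.mem_insert_self _ _, h2 ▸ hxl'⟩⟩
        have hm' : m ∈ L' := by
          simp [hL', Finset.mem_erase, h1, h2, hm]
        obtain ⟨y, hy⟩ := hT2 m hm'
        exact ⟨y, Finset.mem_inter.2 ⟨Finset.mem_insert_of_mem (Finset.mem_inter.1 hy).1,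
          (Finset.mem_inter.1 hy).2⟩⟩
      · have hc1 : L'.card = L.card - 2 := by
          rw [hL', Finset.card_erase_of_mem hl', Finset.card_erase_of_mem hl]
          omega
        have hc2 : 2 ≤ L.card := Finset.one_lt_card.2 ⟨l, hl, l', hl'L, hnel⟩
        have := Finset.card_insert_le x T
        omega

/-- Every intersecting linear system with maximum degree `Δ = 2`
satisfies `τ = ⌈ν₂/2⌉`. -/
theorem tau_eq_of_intersecting_delta_eq_two (S : LinearSystem α)
    (hint : S.Intersecting) (hΔ : S.Delta = 2) :
    S.tau = (S.nu2 + 1) / 2 := by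
  classical
  -- degree bound: every point lies in at most two lines
  have hdeg : ∀ x : α, (S.L.filter (fun l => x ∈ l)).card ≤ 2 := by
    intro x
    by_cases hx : x ∈ S.P
    · have : S.deg x ≤ S.Delta := Finset.le_sup hx
      rw [hΔ] at this
      exact this
    · have : S.L.filter (fun l => x ∈ l) = ∅ := by
        rw [Finset.filter_eq_empty_iff]
        intro l hl hxl
        exact hx (S.sub l hl hxl)
      simp [this]
  -- there is a point of degree ≥ 2, hence at least two lines
  have hn2 : 2 ≤ S.L.card := by
    have h2 : (2:ℕ) ≤ S.P.sup S.deg := by rw [← LinearSystem.Delta, hΔ]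
    rw [Finset.le_sup_iff (by norm_num : (0:ℕ) < 2)] at h2
    obtain ⟨x, hx, hx2⟩ := h2
    calc 2 ≤ (S.L.filter (fun l => x ∈ l)).card := hx2
    _ ≤ S.L.card := Finset.card_le_card (Finset.filter_subset _ _)
  -- every line is nonempty
  have hlne : ∀ l ∈ S.L, l.Nonempty := by
    intro l hl
    obtain ⟨l', hl', hne'⟩ := Finset.exists_mem_ne (s := S.L) (by omega) l
    have h1 : (l ∩ l').card = 1 := hint l hl l' hl' hne'.symm
    have : (l ∩ l').Nonempty := Finset.card_pos.1 (by omega)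
    exact this.mono Finset.inter_subset_left
  -- nu2 equals the number of lines
  have hnu2 : S.nu2 = S.L.card := by
    have hmem : S.L.card ∈ {n | ∃ R : Finset (Finset α), S.IsTwoPacking R ∧ R.card = n} :=
      ⟨S.L, ⟨Finset.Subset.refl _, hdeg⟩, rfl⟩
    have hbdd : ∀ m ∈ {n | ∃ R : Finset (Finset α), S.IsTwoPacking R ∧ R.card = n},
        m ≤ S.L.card := by
      rintro m ⟨R, ⟨hRL, _⟩, rfl⟩
      exact Finset.card_le_card hRL
    exact le_antisymm (csSup_le ⟨_, hmem⟩ hbdd) (le_csSup ⟨S.L.card, hbdd⟩ hmem)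
  -- tau equals ⌈n/2⌉
  have htau : S.tau = (S.L.card + 1) / 2 := by
    apply le_antisymm
    · -- construct a small transversal
      obtain ⟨T, hT1, hT2, hT3⟩ := exists_small_transversal S.L hlne
        (fun l hl l' hl' hne' => by
          have h1 : (l ∩ l').card = 1 := hint l hl l' hl' hne'
          exact Finset.card_pos.1 (by omega))
      have hTP : T ⊆ S.P := by
        intro x hxT
        obtain ⟨l, hl, hxl⟩ := hT1 x hxT
        exact S.sub l hl hxl
      have hmem : T.card ∈ {n | ∃ T : Finset α, S.IsTransversal T ∧ T.card = n} :=
        ⟨T, ⟨hTP, hT2⟩, rfl⟩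
      calc S.tau ≤ T.card := Nat.sInf_le hmem
      _ ≤ (S.L.card + 1) / 2 := by omega
    · -- lower bound: each point covers at most two lines
      apply le_csInf
      · refine ⟨S.P.card, S.P, ⟨Finset.Subset.refl _, ?_⟩, rfl⟩
        intro l hl
        obtain ⟨x, hx⟩ := hlne l hl
        exact ⟨x, Finset.mem_inter.2 ⟨S.sub l hl hx, hx⟩⟩
      rintro m ⟨T, ⟨hTP, hT⟩, rfl⟩
      have hcov : S.L ⊆ T.biUnion (fun t => S.L.filter (fun l => t ∈ l)) := by
        intro l hl
        obtain ⟨t, ht⟩ := hT l hl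
        rw [Finset.mem_biUnion]
        exact ⟨t, (Finset.mem_inter.1 ht).1,
          Finset.mem_filter.2 ⟨hl, (Finset.mem_inter.1 ht).2⟩⟩
      have h1 : S.L.card ≤ 2 * T.card := by
        calc S.L.card ≤ (T.biUnion (fun t => S.L.filter (fun l => t ∈ l))).card :=
              Finset.card_le_card hcov
        _ ≤ ∑ t ∈ T, (S.L.filter (fun l => t ∈ l)).card := Finset.card_biUnion_le
        _ ≤ ∑ _t ∈ T, 2 := Finset.sum_le_sum (fun t _ => hdeg t)
        _ = 2 * T.card := by rw [Finset.sum_const, smul_eq_mul, Nat.mul_comm]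
      omega
  rw [htau, hnu2]
end
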